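/- Let 0 ≤ γ < 1 and θ* > (2/e)√(1−γ). Let p_{θ*}(y) = (1/(2√(2π)))(e^{−(y−θ*)²/2} + e^{−(y+θ*)²/2}), q(y;θ) = 1/(1 + e^{2yθ}), M₀(θ) = ∫ (1 − 2q(y;θ)) y p_{θ*}(y) dy, and M_γ(θ) = γθ* + (1−γ) M₀(θ). Then for every θ > θ*: |M_γ(θ) − θ*| ≤ (1−γ) · (4/(θ*² e²)) · |θ − θ*|, and the contraction coefficient r = (1−γ)·4/(θ*² e²) satisfies r < 1. -/

import Mathlib

open MeasureTheory Real

lemma aux_int_exp (μ : ℝ) : Integrable (fun y : ℝ => Real.exp (-(y - μ)^2/2)) := by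
  have h : Integrable (fun y : ℝ => Real.exp (-(1/2 : ℝ) * y^2)) :=
    integrable_exp_neg_mul_sq (by norm_num)
  have := h.comp_sub_right μ
  convert this using 2 with y
  ring_nf

lemma aux_int_exp' (θstar : ℝ) : Integrable (fun y : ℝ => Real.exp (-(y + θstar)^2/2)) := by
  have := aux_int_exp (-θstar)
  convert this using 3 with y
  ring

lemma aux_int_mul_exp (μ : ℝ) : Integrable (fun y : ℝ => y * Real.exp (-(y - μ)^2/2)) := by
  have h : Integrable (fun y : ℝ => y * Real.exp (-(1/2 : ℝ) * y^2)) :=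
    integrable_mul_exp_neg_mul_sq (by norm_num)
  have h2 := (h.add ((aux_int_exp 0).const_mul μ)).comp_sub_right μ
  convert h2 using 2 with y
  simp only [Pi.add_apply, sub_zero]
  ring_nf

lemma aux_int_mul_exp' (θstar : ℝ) : Integrable (fun y : ℝ => y * Real.exp (-(y + θstar)^2/2)) := by
  have := aux_int_mul_exp (-θstar)
  convert this using 4 with y
  ring

lemma aux_p_integrable (θstar : ℝ) :
    Integrable (fun y : ℝ => (1 / (2 * Real.sqrt (2 * Real.pi))) *
      (Real.exp (-(y - θstar)^2/2) + Real.exp (-(y + θstar)^2/2))) :=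
  ((aux_int_exp θstar).add (aux_int_exp' θstar)).const_mul _

lemma aux_integral_exp (μ : ℝ) : ∫ y : ℝ, Real.exp (-(y - μ)^2/2) = Real.sqrt (2 * π) := by
  have h : ∫ y : ℝ, Real.exp (-(y - μ)^2/2) = ∫ y : ℝ, Real.exp (-(1/2 : ℝ) * y^2) := by
    rw [← integral_sub_right_eq_self (fun y : ℝ => Real.exp (-(1/2 : ℝ) * y^2)) μ]
    congr 1 with y
    ring_nf
  rw [h, integral_gaussian, show π / (1/2 : ℝ) = 2 * π by ring]

lemma aux_integral_odd : ∫ y : ℝ, y * Real.exp (-(1/2 : ℝ) * y^2) = 0 := by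
  have h := MeasureTheory.integral_neg_eq_self (fun y : ℝ => y * Real.exp (-(1/2 : ℝ) * y^2)) volume
  have h2 : ∫ y : ℝ, (-y) * Real.exp (-(1/2 : ℝ) * (-y)^2) =
      -∫ y : ℝ, y * Real.exp (-(1/2 : ℝ) * y^2) := by
    rw [← integral_neg]; congr 1 with y; ring_nf
  rw [h2] at h
  linarith

lemma aux_integral_mul_exp (μ : ℝ) :
    ∫ y : ℝ, y * Real.exp (-(y - μ)^2/2) = μ * Real.sqrt (2 * π) := by
  have h : ∫ y : ℝ, y * Real.exp (-(y - μ)^2/2)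
      = ∫ y : ℝ, (y + μ) * Real.exp (-(1/2 : ℝ) * y^2) := by
    rw [← integral_add_right_eq_self (fun y : ℝ => y * Real.exp (-(y - μ)^2/2)) μ]
    congr 1 with y
    ring_nf
  rw [h]
  have hi1 : Integrable (fun y : ℝ => y * Real.exp (-(1/2 : ℝ) * y^2)) :=
    integrable_mul_exp_neg_mul_sq (by norm_num)
  have hi2 : Integrable (fun y : ℝ => μ * Real.exp (-(1/2 : ℝ) * y^2)) :=
    (integrable_exp_neg_mul_sq (by norm_num)).const_mul μ
  have h5 : ∫ y : ℝ, (y + μ) * Real.exp (-(1/2 : ℝ) * y^2)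
      = (∫ y : ℝ, y * Real.exp (-(1/2 : ℝ) * y^2)) + ∫ y : ℝ, μ * Real.exp (-(1/2 : ℝ) * y^2) := by
    rw [← integral_add hi1 hi2]; congr 1 with y; ring
  rw [h5, aux_integral_odd, integral_const_mul, integral_gaussian,
    show π / (1/2 : ℝ) = 2 * π by ring]
  ring

lemma aux_fstar (θstar y : ℝ) :
    (1 - 2 * (1/(1+Real.exp (2*y*θstar)))) * y *
      ((1/(2*Real.sqrt (2*Real.pi))) * (Real.exp (-(y-θstar)^2/2) + Real.exp (-(y+θstar)^2/2)))
    = (1/(2*Real.sqrt (2*Real.pi))) *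
      (y * Real.exp (-(y-θstar)^2/2) - y * Real.exp (-(y+θstar)^2/2)) := by
  have hE : Real.exp (-(y-θstar)^2/2) = Real.exp (-(y+θstar)^2/2) * Real.exp (2*y*θstar) := by
    rw [← Real.exp_add]; congr 1; ring
  have h1 : (0:ℝ) < 1 + Real.exp (2*y*θstar) := by positivity
  rw [hE]
  field_simp
  ring

lemma aux_main_integrable (θstar t : ℝ) :
    Integrable (fun y : ℝ => (1 - 2 * (1/(1+Real.exp (2*y*t)))) * y *
      ((1/(2*Real.sqrt (2*Real.pi))) * (Real.exp (-(y-θstar)^2/2) + Real.exp (-(y+θstar)^2/2)))) := by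
  have hbd : Integrable (fun y : ℝ => (1/(2*Real.sqrt (2*Real.pi))) *
      (|y * Real.exp (-(y-θstar)^2/2)| + |y * Real.exp (-(y+θstar)^2/2)|)) :=
    ((aux_int_mul_exp θstar).abs.add (aux_int_mul_exp' θstar).abs).const_mul _
  apply hbd.mono'
  · apply Continuous.aestronglyMeasurable
    have hne : ∀ y : ℝ, 1 + Real.exp (2*y*t) ≠ 0 := fun y => by positivity
    fun_prop (disch := exact hne)
  · filter_upwards with y
    have hEpos : (0:ℝ) < Real.exp (2*y*t) := Real.exp_pos _
    have hq1 : |1 - 2 * (1/(1+Real.exp (2*y*t)))| ≤ 1 := by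
      rw [abs_le]
      have h1 : 0 < 1/(1+Real.exp (2*y*t)) := by positivity
      have h2 : 1/(1+Real.exp (2*y*t)) < 1 := by
        rw [div_lt_one (by positivity)]; linarith
      constructor <;> linarith
    have hspos : (0:ℝ) < Real.sqrt (2*Real.pi) := Real.sqrt_pos.2 (by positivity)
    have hA : (0:ℝ) ≤ Real.exp (-(y-θstar)^2/2) := (Real.exp_pos _).le
    have hB : (0:ℝ) ≤ Real.exp (-(y+θstar)^2/2) := (Real.exp_pos _).le
    rw [Real.norm_eq_abs, abs_mul, abs_mul]
    have habs : |(1/(2*Real.sqrt (2*Real.pi))) *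
        (Real.exp (-(y-θstar)^2/2) + Real.exp (-(y+θstar)^2/2))|
        = (1/(2*Real.sqrt (2*Real.pi))) *
        (Real.exp (-(y-θstar)^2/2) + Real.exp (-(y+θstar)^2/2)) := abs_of_nonneg (by positivity)
    rw [habs, abs_mul, abs_mul, abs_of_nonneg hA, abs_of_nonneg hB]
    nlinarith [abs_nonneg y, mul_le_mul_of_nonneg_right hq1 (abs_nonneg y),
      mul_pos (by positivity : (0:ℝ) < 1/(2*Real.sqrt (2*Real.pi)))
        (by positivity : (0:ℝ) < Real.exp (-(y-θstar)^2/2) + Real.exp (-(y+θstar)^2/2))]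

lemma aux_hasDeriv (y t : ℝ) :
    HasDerivAt (fun s : ℝ => (1 - 2 * (1 / (1 + Real.exp (2 * y * s)))) * y)
      (4 * y^2 * Real.exp (2*y*t) / (1 + Real.exp (2*y*t))^2) t := by
  have hne : (1 : ℝ) + Real.exp (2*y*t) ≠ 0 := by positivity
  have h1 : HasDerivAt (fun s : ℝ => 2 * y * s) (2 * y) t := by
    simpa using (hasDerivAt_id t).const_mul (2*y)
  have hinv := ((h1.exp.const_add 1).inv hne)
  have hfull := ((hinv.const_mul 2).const_sub 1).mul_const y
  simp only [one_div]
  convert hfull using 1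
  have hpos : (0:ℝ) < 1 + Real.exp (2*y*t) := by positivity
  · rfl
  · rfl
  · rfl
  · ring

lemma aux_deriv_bound (θstar t y : ℝ) (hθ : 0 < θstar) (ht : θstar ≤ t) :
    4 * y^2 * Real.exp (2*y*t) / (1 + Real.exp (2*y*t))^2
      ≤ 4 / (θstar^2 * Real.exp 1 ^ 2) := by
  have htpos : 0 < t := lt_of_lt_of_le hθ ht
  set E := Real.exp (2*y*t) with hE
  have hEpos : 0 < E := Real.exp_pos _
  set a := |y| with haeq
  have ha : 0 ≤ a := abs_nonneg y
  have key : E * Real.exp (2*a*t) ≤ (1+E)^2 := by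
    rcases le_or_gt 0 y with hy|hy
    · have hay : a = y := abs_of_nonneg hy
      have h0 : E * Real.exp (2*a*t) = E * E := by
        rw [hay, hE, ← Real.exp_add]
      rw [h0]; nlinarith [hEpos]
    · have hay : a = -y := abs_of_neg hy
      have h0 : E * Real.exp (2*a*t) = 1 := by
        rw [hay, hE, ← Real.exp_add, show 2*y*t + 2*(-y)*t = 0 by ring, Real.exp_zero]
      rw [h0]; nlinarith [hEpos]
  have key2 : E / (1+E)^2 ≤ Real.exp (-(2*a*t)) := by
    rw [Real.exp_neg, inv_eq_one_div, div_le_div_iff₀ (by positivity) (Real.exp_pos _)]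
    linarith
  have step2 : a * Real.exp (-(a*t)) ≤ 1/(θstar * Real.exp 1) := by
    have hepos := Real.exp_pos 1
    have hexpat := Real.exp_pos (a*t)
    have h1 : a*t ≤ Real.exp (a*t - 1) := by
      have := Real.add_one_le_exp (a*t - 1); linarith
    have h3 : a*t*Real.exp 1 ≤ Real.exp (a*t) := by
      rw [show Real.exp (a*t) = Real.exp (a*t-1)*Real.exp 1 by rw [← Real.exp_add]; ring_nf]
      exact mul_le_mul_of_nonneg_right h1 hepos.le
    rw [Real.exp_neg, ← div_eq_mul_inv, div_le_div_iff₀ hexpat (by positivity)]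
    have h4 : a*θstar ≤ a*t := mul_le_mul_of_nonneg_left ht ha
    nlinarith [mul_le_mul_of_nonneg_right h4 hepos.le]
  have hy2 : y^2 = a^2 := (sq_abs y).symm
  have e2 : Real.exp (-(2*a*t)) = Real.exp (-(a*t))^2 := by
    rw [pow_two, ← Real.exp_add]; ring_nf
  calc 4 * y^2 * E / (1+E)^2 = 4*a^2 * (E/(1+E)^2) := by rw [hy2]; ring
    _ ≤ 4*a^2 * Real.exp (-(2*a*t)) := by
        apply mul_le_mul_of_nonneg_left key2 (by positivity)
    _ = 4 * (a * Real.exp (-(a*t)))^2 := by rw [e2]; ring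
    _ ≤ 4 * (1/(θstar * Real.exp 1))^2 := by
        have := pow_le_pow_left₀ (by positivity) step2 2
        linarith
    _ = 4 / (θstar^2 * Real.exp 1 ^ 2) := by
        rw [div_pow, one_pow, mul_pow]; ring

lemma aux_lip (θstar θ y : ℝ) (hθ : 0 < θstar) (hle : θstar ≤ θ) :
    |(1 - 2 * (1/(1+Real.exp (2*y*θ)))) * y - (1 - 2 * (1/(1+Real.exp (2*y*θstar)))) * y|
      ≤ 4/(θstar^2 * Real.exp 1^2) * (θ - θstar) := by
  have h := Convex.norm_image_sub_le_of_norm_hasDerivWithin_le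
    (f := fun s : ℝ => (1 - 2 * (1/(1+Real.exp (2*y*s)))) * y)
    (f' := fun s : ℝ => 4*y^2*Real.exp (2*y*s)/(1+Real.exp (2*y*s))^2)
    (s := Set.Icc θstar θ)
    (fun x _ => (aux_hasDeriv y x).hasDerivWithinAt)
    (fun x hx => by
      rw [Real.norm_eq_abs, abs_of_nonneg (by positivity)]
      exact aux_deriv_bound θstar x y hθ hx.1)
    (convex_Icc _ _) (Set.left_mem_Icc.2 hle) (Set.right_mem_Icc.2 hle)
  rw [Real.norm_eq_abs, Real.norm_eq_abs, abs_of_nonneg (by linarith : (0:ℝ) ≤ θ - θstar)] at h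
  exact h

/-- Theorem 3, item 1: for the symmetric two-component Gaussian
mixture, when `θstar > (2/e)√(1−γ)` the semi-supervised population EM map `Mγ`
contracts globally from any `θ > θstar` at rate `r = (1−γ)·4/(θstar² e²) < 1`. -/
theorem symmetric_gaussian_mixture_em_global_convergence_item1
    (γ θstar : ℝ) (hγ0 : 0 ≤ γ) (hγ1 : γ < 1)
    (hθstar : θstar > (2 / Real.exp 1) * Real.sqrt (1 - γ))
    (p : ℝ → ℝ)
    (hp : p = fun y => (1 / (2 * Real.sqrt (2 * Real.pi))) *
      (Real.exp (-(y - θstar) ^ 2 / 2) + Real.exp (-(y + θstar) ^ 2 / 2)))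
    (q : ℝ → ℝ → ℝ)
    (hq : q = fun θ y => 1 / (1 + Real.exp (2 * y * θ)))
    (M0 : ℝ → ℝ)
    (hM0 : M0 = fun θ => ∫ y : ℝ, (1 - 2 * q θ y) * y * p y)
    (Mγ : ℝ → ℝ)
    (hMγ : Mγ = fun θ => γ * θstar + (1 - γ) * M0 θ)
    (r : ℝ)
    (hr : r = (1 - γ) * (4 / (θstar ^ 2 * Real.exp 1 ^ 2))) :
    (∀ θ > θstar, |Mγ θ - θstar| ≤ r * |θ - θstar|) ∧ r < 1 := by
  have he1 : (0:ℝ) < Real.exp 1 := Real.exp_pos 1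
  have h1γ : (0:ℝ) ≤ 1 - γ := by linarith
  have hθpos : 0 < θstar := lt_of_le_of_lt (by positivity) hθstar
  have hs : Real.sqrt (1-γ)^2 = 1-γ := Real.sq_sqrt h1γ
  have hrlt : r < 1 := by
    have h2 : 2 * Real.sqrt (1-γ) < θstar * Real.exp 1 := by
      have h3 := mul_lt_mul_of_pos_right hθstar he1
      calc 2*Real.sqrt (1-γ) = (2/Real.exp 1 * Real.sqrt (1-γ)) * Real.exp 1 := by field_simp
        _ < θstar * Real.exp 1 := h3
    rw [hr, show (1-γ) * (4/(θstar^2*Real.exp 1^2)) = (1-γ)*4/(θstar^2*Real.exp 1^2) from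
      (mul_div_assoc _ _ _).symm, div_lt_one (by positivity)]
    nlinarith [mul_pos (sub_pos.2 h2)
      (by positivity : (0:ℝ) < θstar*Real.exp 1 + 2*Real.sqrt (1-γ))]
  refine ⟨?_, hrlt⟩
  intro θ hθ
  have hle : θstar ≤ θ := le_of_lt hθ
  set C : ℝ := 4/(θstar^2 * Real.exp 1^2) with hCdef
  have hCpos : 0 < C := by positivity
  have hM0' : ∀ t : ℝ, M0 t = ∫ y : ℝ, (1 - 2 * (1/(1+Real.exp (2*y*t)))) * y *
      ((1/(2*Real.sqrt (2*Real.pi))) *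
        (Real.exp (-(y-θstar)^2/2) + Real.exp (-(y+θstar)^2/2))) := by
    intro t; simp only [hM0, hq, hp]
  have hsqpos : 0 < Real.sqrt (2*π) := Real.sqrt_pos.2 (by positivity)
  have hfix : M0 θstar = θstar := by
    rw [hM0' θstar]
    simp_rw [aux_fstar θstar]
    rw [integral_const_mul, integral_sub (aux_int_mul_exp θstar) (aux_int_mul_exp' θstar),
      aux_integral_mul_exp θstar]
    have hB : ∫ y : ℝ, y * Real.exp (-(y+θstar)^2/2) = -θstar * Real.sqrt (2*π) := by
      have he : (fun y : ℝ => y * Real.exp (-(y+θstar)^2/2))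
          = fun y : ℝ => y * Real.exp (-(y-(-θstar))^2/2) := by
        funext y; ring_nf
      rw [he, aux_integral_mul_exp]
    rw [hB]
    field_simp
    ring
  have hpone : ∫ y : ℝ, (1/(2*Real.sqrt (2*Real.pi))) *
      (Real.exp (-(y-θstar)^2/2) + Real.exp (-(y+θstar)^2/2)) = 1 := by
    rw [integral_const_mul, integral_add (aux_int_exp θstar) (aux_int_exp' θstar),
      aux_integral_exp]
    have hB : ∫ y : ℝ, Real.exp (-(y+θstar)^2/2) = Real.sqrt (2*π) := by
      have he : (fun y : ℝ => Real.exp (-(y+θstar)^2/2))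
          = fun y : ℝ => Real.exp (-(y-(-θstar))^2/2) := by
        funext y; ring_nf
      rw [he, aux_integral_exp]
    rw [hB]
    field_simp
    ring
  have hM0diff : |M0 θ - θstar| ≤ C * (θ - θstar) := by
    conv_lhs => rw [← hfix]
    rw [hM0' θ, hM0' θstar,
      ← integral_sub (aux_main_integrable θstar θ) (aux_main_integrable θstar θstar)]
    have hint := (aux_main_integrable θstar θ).sub (aux_main_integrable θstar θstar)
    calc |∫ y : ℝ, ((1 - 2 * (1/(1+Real.exp (2*y*θ)))) * y *
            ((1/(2*Real.sqrt (2*Real.pi))) *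
              (Real.exp (-(y-θstar)^2/2) + Real.exp (-(y+θstar)^2/2)))
          - (1 - 2 * (1/(1+Real.exp (2*y*θstar)))) * y *
            ((1/(2*Real.sqrt (2*Real.pi))) *
              (Real.exp (-(y-θstar)^2/2) + Real.exp (-(y+θstar)^2/2))))|
        ≤ ∫ y : ℝ, ‖(1 - 2 * (1/(1+Real.exp (2*y*θ)))) * y *
            ((1/(2*Real.sqrt (2*Real.pi))) *
              (Real.exp (-(y-θstar)^2/2) + Real.exp (-(y+θstar)^2/2)))
          - (1 - 2 * (1/(1+Real.exp (2*y*θstar)))) * y *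
            ((1/(2*Real.sqrt (2*Real.pi))) *
              (Real.exp (-(y-θstar)^2/2) + Real.exp (-(y+θstar)^2/2)))‖ := by
          rw [← Real.norm_eq_abs]
          exact MeasureTheory.norm_integral_le_integral_norm _
      _ ≤ ∫ y : ℝ, (C * (θ - θstar)) * ((1/(2*Real.sqrt (2*Real.pi))) *
            (Real.exp (-(y-θstar)^2/2) + Real.exp (-(y+θstar)^2/2))) := by
          apply integral_mono hint.norm ((aux_p_integrable θstar).const_mul _)
          intro y
          simp only [Pi.sub_apply, Real.norm_eq_abs]
          have hPpos : (0:ℝ) ≤ (1/(2*Real.sqrt (2*Real.pi))) *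
              (Real.exp (-(y-θstar)^2/2) + Real.exp (-(y+θstar)^2/2)) := by positivity
          have hfac : (1 - 2 * (1/(1+Real.exp (2*y*θ)))) * y *
              ((1/(2*Real.sqrt (2*Real.pi))) *
                (Real.exp (-(y-θstar)^2/2) + Real.exp (-(y+θstar)^2/2)))
            - (1 - 2 * (1/(1+Real.exp (2*y*θstar)))) * y *
              ((1/(2*Real.sqrt (2*Real.pi))) *
                (Real.exp (-(y-θstar)^2/2) + Real.exp (-(y+θstar)^2/2)))
            = ((1 - 2 * (1/(1+Real.exp (2*y*θ)))) * y
                - (1 - 2 * (1/(1+Real.exp (2*y*θstar)))) * y) *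
              ((1/(2*Real.sqrt (2*Real.pi))) *
                (Real.exp (-(y-θstar)^2/2) + Real.exp (-(y+θstar)^2/2))) := by ring
          rw [hfac, abs_mul, abs_of_nonneg hPpos]
          exact mul_le_mul_of_nonneg_right (aux_lip θstar θ y hθpos hle) hPpos
      _ = C * (θ - θstar) := by rw [integral_const_mul, hpone, mul_one]
  have hfin : Mγ θ - θstar = (1-γ) * (M0 θ - θstar) := by rw [hMγ]; ring
  rw [hfin, abs_mul, abs_of_nonneg h1γ, hr,
    abs_of_nonneg (by linarith : (0:ℝ) ≤ θ - θstar)]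
  calc (1-γ) * |M0 θ - θstar| ≤ (1-γ) * (C * (θ - θstar)) :=
      mul_le_mul_of_nonneg_left hM0diff h1γ
    _ = (1-γ) * (4/(θstar^2*Real.exp 1^2)) * (θ - θstar) := by rw [hCdef]; ring
    _ = (1-γ) * (4/(θstar^2*Real.exp 1^2)) * (θ - θstar) := rfl
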